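/- Let P be a non-atomic probability distribution on ℝ with finite variance σ_P², let p ∈ (0,1), and let x_p be a point with Pr_{X∼P}[X < x_p] = p (such a point exists since the cumulative distribution function of a non-atomic distribution is continuous). Then the conditional distribution of P on [x_p, ∞) has variance at most σ_P²/(1 − p). -/

import Mathlib

open MeasureTheory ProbabilityTheory

/-- Variance is at most the second moment about any point. -/
lemma variance_le_integral_sq_sub {μ : Measure ℝ} [IsProbabilityMeasure μ]
    (h : MemLp id 2 μ) (c : ℝ) :
    variance id μ ≤ ∫ x, (x - c) ^ 2 ∂μ := by
  have hY : MemLp (fun x : ℝ => x - c) 2 μ := h.sub (memLp_const c)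
  have hint : Integrable (fun x : ℝ => x) μ := h.integrable one_le_two
  have hmean : (∫ x, (x - c) ∂μ) = (∫ x, x ∂μ) - c := by
    rw [integral_sub hint (integrable_const c)]
    simp
  have hev : evariance id μ = evariance (fun x : ℝ => x - c) μ := by
    unfold evariance
    congr 1 with x
    simp only [id_eq]
    rw [hmean]
    ring_nf
  have := variance_le_expectation_sq (X := fun x : ℝ => x - c) (μ := μ)
    hY.aestronglyMeasurable
  calc variance id μ = variance (fun x : ℝ => x - c) μ := by
        unfold variance; rw [hev]
    _ ≤ ∫ x, ((fun x : ℝ => x - c) ^ 2) x ∂μ := this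
    _ = ∫ x, (x - c) ^ 2 ∂μ := by simp

/-- **Variance bound for the upper-tail conditional distribution.**
Let `P` be a non-atomic probability distribution on `ℝ` with finite variance, let
`p ∈ (0,1)`, and let `x_p` be a point with `Pr_{X∼P}[X < x_p] = p`. Then the
conditional distribution of `P` on `[x_p, ∞)` has variance at most
`Var(P)/(1 - p)`. -/
theorem conditional_variance_bound
    (P : Measure ℝ) [IsProbabilityMeasure P]
    (hatom : ∀ x : ℝ, P {x} = 0)
    (hL2 : MemLp id 2 P)
    (p : ℝ) (hp : p ∈ Set.Ioo (0 : ℝ) 1)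
    (xp : ℝ) (hxp : P {y : ℝ | y < xp} = ENNReal.ofReal p) :
    variance id (ProbabilityTheory.cond P (Set.Ici xp)) ≤ variance id P / (1 - p) := by
  obtain ⟨hp0, hp1⟩ := hp
  have h1p : (0 : ℝ) < 1 - p := by linarith
  set s : Set ℝ := Set.Ici xp with hs_def
  have hPs : P s = ENNReal.ofReal (1 - p) := by
    have hc : s = (Set.Iio xp)ᶜ := by
      rw [Set.compl_Iio]
    rw [hc, measure_compl measurableSet_Iio (measure_ne_top _ _), measure_univ]
    have : P (Set.Iio xp) = ENNReal.ofReal p := hxp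
    rw [this, ENNReal.ofReal_sub _ hp0.le, ENNReal.ofReal_one]
  have hPs0 : P s ≠ 0 := by
    rw [hPs]; exact (ENNReal.ofReal_pos.2 h1p).ne'
  have hQprob : IsProbabilityMeasure (ProbabilityTheory.cond P s) :=
    cond_isProbabilityMeasure hPs0
  have hQdef : ProbabilityTheory.cond P s = (P s)⁻¹ • P.restrict s := rfl
  have hQL2 : MemLp id 2 (ProbabilityTheory.cond P s) := by
    rw [hQdef]
    exact (hL2.restrict s).smul_measure (by simp [hPs0])
  set m : ℝ := ∫ x, x ∂P with hm
  have hint2 : Integrable (fun x : ℝ => (x - m) ^ 2) P := by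
    have := (hL2.sub (memLp_const m)).integrable_sq
    simpa using this
  have hvarP : variance id P = ∫ x, (x - m) ^ 2 ∂P := by
    rw [variance_eq_integral hL2.aestronglyMeasurable.aemeasurable]
    simp [hm]
  have hset : ∫ x in s, (x - m) ^ 2 ∂P ≤ ∫ x, (x - m) ^ 2 ∂P :=
    setIntegral_le_integral hint2 (Filter.Eventually.of_forall fun x => sq_nonneg _)
  have htoReal : ((P s)⁻¹).toReal = (1 - p)⁻¹ := by
    rw [hPs, ← ENNReal.ofReal_inv_of_pos h1p, ENNReal.toReal_ofReal (inv_nonneg.2 h1p.le)]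
  calc variance id (ProbabilityTheory.cond P s)
      ≤ ∫ x, (x - m) ^ 2 ∂(ProbabilityTheory.cond P s) :=
        variance_le_integral_sq_sub hQL2 m
    _ = (1 - p)⁻¹ * ∫ x in s, (x - m) ^ 2 ∂P := by
        rw [hQdef, integral_smul_measure, htoReal, smul_eq_mul]
    _ ≤ (1 - p)⁻¹ * ∫ x, (x - m) ^ 2 ∂P := by
        exact mul_le_mul_of_nonneg_left hset (inv_nonneg.2 h1p.le)
    _ = variance id P / (1 - p) := by
        rw [hvarP]; rw [inv_mul_eq_div]
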